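/- For every n ≥ 1, every m ≥ 2 and every r ≥ 1 such that m does not divide r, the power e_n^r of the n-th Engel word is not a product of two m-th powers in F₂: there do not exist a, b ∈ F₂ with e_n^r = a^m b^m. In particular (r = 1), no Engel word e_n is a product of two m-th powers for any m ≥ 2. -/

import Mathlib

open Finset
open scoped commutatorElement

structure Aff (R : Type*) [CommRing R] where
  u : Rˣ
  v : R

namespace Aff
variable {R : Type*} [CommRing R]

instance : Mul (Aff R) := ⟨fun a b => ⟨a.u * b.u, (a.u : R) * b.v + a.v⟩⟩
instance : One (Aff R) := ⟨⟨1, 0⟩⟩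
instance : Inv (Aff R) := ⟨fun a => ⟨a.u⁻¹, -(((a.u⁻¹ : Rˣ) : R) * a.v)⟩⟩

@[simp] lemma mul_u (a b : Aff R) : (a * b).u = a.u * b.u := rfl
@[simp] lemma mul_v (a b : Aff R) : (a * b).v = (a.u : R) * b.v + a.v := rfl
@[simp] lemma one_u : (1 : Aff R).u = 1 := rfl
@[simp] lemma one_v : (1 : Aff R).v = 0 := rfl
@[simp] lemma inv_u (a : Aff R) : (a⁻¹).u = a.u⁻¹ := rfl
@[simp] lemma inv_v (a : Aff R) : (a⁻¹).v = -(((a.u⁻¹ : Rˣ) : R) * a.v) := rfl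

@[ext] lemma ext {a b : Aff R} (hu : a.u = b.u) (hv : a.v = b.v) : a = b := by
  cases a; cases b; simp_all

instance : Group (Aff R) where
  mul_assoc a b c := by ext <;> simp [mul_assoc] <;> ring
  one_mul a := by ext <;> simp
  mul_one a := by ext <;> simp
  inv_mul_cancel a := by
    ext <;> simp

/-- `u` as a monoid hom. -/
def uHom : Aff R →* Rˣ where
  toFun := Aff.u
  map_one' := rfl
  map_mul' _ _ := rfl

lemma pow_v (a : Aff R) (p : ℕ) :
    (a ^ p).v = (∑ j ∈ range p, ((a.u : R)) ^ j) * a.v := by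
  induction p with
  | zero => simp
  | succ p ih =>
    have hu : (a ^ p).u = a.u ^ p := map_pow uHom a p
    rw [pow_succ, mul_v, hu, sum_range_succ, ih]
    push_cast
    ring

end Aff

/-- The Engel words: `engel 1 = ⁅y, x⁆` and `engel (n+1) = ⁅y, engel n⁆`. -/
def engel : ℕ → FreeGroup (Fin 2)
  | 0 => 1
  | 1 => ⁅FreeGroup.of (1 : Fin 2), FreeGroup.of (0 : Fin 2)⁆
  | n + 2 => ⁅FreeGroup.of (1 : Fin 2), engel (n + 1)⁆

lemma engel_one : engel 1 = ⁅FreeGroup.of (1 : Fin 2), FreeGroup.of (0 : Fin 2)⁆ := rfl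
lemma engel_succ_succ (n : ℕ) : engel (n + 2) = ⁅FreeGroup.of (1 : Fin 2), engel (n + 1)⁆ := rfl

section Phi
variable {R : Type*} [CommRing R]

/-- The affine representation sending `x ↦ (z ↦ z + 1)` and `y ↦ (z ↦ t z)`. -/
def phi (t : Rˣ) : FreeGroup (Fin 2) →* Aff R :=
  FreeGroup.lift ![⟨1, 1⟩, ⟨t, 0⟩]

@[simp] lemma phi_x (t : Rˣ) : phi t (FreeGroup.of (0 : Fin 2)) = ⟨1, 1⟩ := by
  simp [phi]
@[simp] lemma phi_y (t : Rˣ) : phi t (FreeGroup.of (1 : Fin 2)) = ⟨t, 0⟩ := by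
  simp [phi]

lemma phi_engel (t : Rˣ) (n : ℕ) : phi t (engel (n + 1)) = ⟨1, ((t : R) - 1) ^ (n + 1)⟩ := by
  induction n with
  | zero =>
    rw [engel_one, map_commutatorElement]
    ext <;> simp [commutatorElement_def] <;> ring
  | succ p ih =>
    rw [engel_succ_succ, map_commutatorElement, ih]
    ext <;> simp [commutatorElement_def, pow_succ] <;> ring

/-- exponent sum of `y`. -/
def chi : FreeGroup (Fin 2) →* Multiplicative ℤ :=
  FreeGroup.lift ![1, Multiplicative.ofAdd 1]

lemma phi_u (t : Rˣ) (a : FreeGroup (Fin 2)) :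
    (phi t a).u = t ^ (Multiplicative.toAdd (chi a)) := by
  have : (Aff.uHom.comp (phi t)) = (zpowersHom Rˣ t).comp chi := by
    apply FreeGroup.ext_hom
    intro i
    fin_cases i <;> simp [Aff.uHom, chi, zpowersHom_apply]
  have h2 := DFunLike.congr_fun this a
  simpa [Aff.uHom, zpowersHom_apply] using h2

lemma chi_engel (n : ℕ) : chi (engel (n + 1)) = 1 := by
  cases n with
  | zero => rw [engel_one, map_commutatorElement]; exact commutatorElement_eq_one_iff_mul_comm.2 (mul_comm _ _)
  | succ p => rw [engel_succ_succ, map_commutatorElement]; exact commutatorElement_eq_one_iff_mul_comm.2 (mul_comm _ _)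

end Phi

section Main
variable {R : Type*} [CommRing R]
open Finset

lemma phi_v_eq (t : Rˣ) (a b : FreeGroup (Fin 2)) (m : ℕ) :
    (phi t (a ^ m * b ^ m)).v =
      (((t ^ Multiplicative.toAdd (chi a) : Rˣ) : R)) ^ m *
        ((∑ j ∈ range m, ((t ^ Multiplicative.toAdd (chi b) : Rˣ) : R) ^ j) * (phi t b).v) +
      (∑ j ∈ range m, ((t ^ Multiplicative.toAdd (chi a) : Rˣ) : R) ^ j) * (phi t a).v := by
  rw [map_mul, map_pow, map_pow, Aff.mul_v, Aff.pow_v, Aff.pow_v]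
  have ha : (phi t a ^ m).u = (phi t a).u ^ m := map_pow Aff.uHom _ _
  rw [ha, phi_u, phi_u, Units.val_pow_eq_pow_val]

lemma phi_engel_pow_v (t : Rˣ) (n r : ℕ) :
    (phi t (engel (n + 1) ^ r)).v = (r : R) * ((t : R) - 1) ^ (n + 1) := by
  rw [map_pow, phi_engel, Aff.pow_v]
  simp

end Main

lemma exp_two_pi_div_eq_one {c : ℤ} (hc : c ≠ 0)
    (h : Complex.exp (2 * Real.pi * Complex.I / (c : ℂ)) = 1) : c ∣ 1 := by
  obtain ⟨j, hj⟩ := Complex.exp_eq_one_iff.1 h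
  have hπ : (Real.pi : ℂ) ≠ 0 := by exact_mod_cast Real.pi_ne_zero
  have hI : Complex.I ≠ 0 := Complex.I_ne_zero
  have hcC : (c : ℂ) ≠ 0 := Int.cast_ne_zero.2 hc
  rw [div_eq_iff hcC] at hj
  have h2πI : (2 : ℂ) * Real.pi * Complex.I ≠ 0 := by
    simp [hπ, hI]
  have h1 : ((1 : ℤ) : ℂ) = ((j * c : ℤ) : ℂ) := by
    push_cast
    exact mul_left_cancel₀ h2πI (by linear_combination hj)
  have h2 : (1 : ℤ) = j * c := Int.cast_injective h1
  exact ⟨j, by linarith [h2]⟩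

theorem stmt_1 (n m r : ℕ) (hn : 1 ≤ n) (hm : 2 ≤ m) (hr : 1 ≤ r) (hdvd : ¬ m ∣ r) :
    ¬ ∃ a b : FreeGroup (Fin 2), engel n ^ r = a ^ m * b ^ m := by
  rintro ⟨a, b, h⟩
  obtain ⟨n, rfl⟩ : ∃ j, n = j + 1 := ⟨n - 1, by omega⟩
  set k : ℤ := Multiplicative.toAdd (chi a) with hk
  set l : ℤ := Multiplicative.toAdd (chi b) with hl
  have habel : l = -k := by
    have h1 := congrArg chi h
    rw [map_pow, chi_engel, one_pow, map_mul, map_pow, map_pow] at h1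
    have h2 := congrArg Multiplicative.toAdd h1
    simp only [toAdd_one, toAdd_mul, toAdd_pow, nsmul_eq_mul] at h2
    have h3 : (m : ℤ) * (k + l) = 0 := by rw [hk, hl]; linear_combination -h2
    have h4 : (m : ℤ) ≠ 0 := by exact_mod_cast by omega
    have := (mul_eq_zero.1 h3).resolve_left h4
    linarith [this]
  by_cases hk0 : k = 0
  · -- the `t = 1 + nilpotent` representation over `ZMod m`
    have hl0 : l = 0 := by omega
    set Q := Polynomial (ZMod m) ⧸ Ideal.span {(Polynomial.X : Polynomial (ZMod m)) ^ (n + 2)}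
      with hQ
    let mkQ : Polynomial (ZMod m) →+* Q := Ideal.Quotient.mk _
    have hθnil : IsNilpotent (mkQ Polynomial.X) := ⟨n + 2, by
      rw [← map_pow]
      exact Ideal.Quotient.eq_zero_iff_mem.2 (Ideal.subset_span rfl)⟩
    have htu : IsUnit (1 + mkQ Polynomial.X) := hθnil.isUnit_one_add
    set t : Qˣ := htu.unit with ht
    have hts : (t : Q) = 1 + mkQ Polynomial.X := htu.unit_spec
    have hv := congrArg (fun g => (phi t g).v) h
    rw [phi_engel_pow_v, phi_v_eq, ← hk, ← hl, hk0, hl0, zpow_zero] at hv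
    have hmQ : (m : Q) = 0 := by
      have h5 : (m : Polynomial (ZMod m)) = 0 := by
        rw [← map_natCast (Polynomial.C (R := ZMod m)) m, ZMod.natCast_self, map_zero]
      rw [← map_natCast mkQ m, h5, map_zero]
    simp only [Units.val_one, one_pow, one_mul, Finset.sum_const, Finset.card_range,
      nsmul_eq_mul, mul_one, hmQ, zero_mul, add_zero] at hv
    -- hv : r * ((t : Q) - 1) ^ (n + 1) = 0
    have hθ : (t : Q) - 1 = mkQ Polynomial.X := by rw [hts]; ring
    rw [hθ] at hv
    have hz : mkQ ((r : Polynomial (ZMod m)) * Polynomial.X ^ (n + 1)) = 0 := by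
      rw [map_mul, map_natCast, map_pow]
      exact hv
    have hdvd' : (Polynomial.X : Polynomial (ZMod m)) ^ (n + 2) ∣
        (r : Polynomial (ZMod m)) * Polynomial.X ^ (n + 1) :=
      Ideal.mem_span_singleton.1 (Ideal.Quotient.eq_zero_iff_mem.1 hz)
    obtain ⟨q, hq⟩ := hdvd'
    have hc := congrArg (fun p => Polynomial.coeff p (n + 1)) hq
    rw [← map_natCast (Polynomial.C (R := ZMod m)) r, Polynomial.coeff_C_mul,
      Polynomial.coeff_X_pow, if_pos rfl, mul_one, mul_comm,
      Polynomial.coeff_mul_X_pow', if_neg (by omega)] at hc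
    exact hdvd ((ZMod.natCast_eq_zero_iff r m).1 hc)
  · -- the complex root-of-unity representation
    have hmC : (m : ℂ) ≠ 0 := Nat.cast_ne_zero.2 (by omega)
    have hkC : (k : ℂ) ≠ 0 := Int.cast_ne_zero.2 hk0
    have hmZ : ¬ ((m : ℤ) ∣ 1) := by
      intro hd
      have := Int.le_of_dvd one_pos hd
      omega
    set ζ : ℂ := Complex.exp (2 * Real.pi * Complex.I / ((k : ℂ) * m)) with hζ
    have hζ0 : ζ ≠ 0 := Complex.exp_ne_zero _
    set t : ℂˣ := Units.mk0 ζ hζ0 with ht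
    have htv : (t : ℂ) = ζ := rfl
    have hζ1 : ζ ≠ 1 := by
      intro hone
      have h1 : Complex.exp (2 * Real.pi * Complex.I / ((k * m : ℤ) : ℂ)) = 1 := by
        push_cast
        exact hone
      have h2 : (k * (m : ℤ)) ∣ 1 :=
        exp_two_pi_div_eq_one (mul_ne_zero hk0 (by exact_mod_cast hmC)) h1
      exact hmZ (dvd_trans ⟨k, by ring⟩ h2)
    have hzk : ζ ^ (k : ℤ) = Complex.exp (2 * Real.pi * Complex.I / m) := by
      rw [hζ, ← Complex.exp_int_mul]
      congr 1
      field_simp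
    have hke : ζ ^ (k : ℤ) ≠ 1 := by
      rw [hzk]
      intro hone
      have h1 : Complex.exp (2 * Real.pi * Complex.I / ((m : ℤ) : ℂ)) = 1 := by
        push_cast
        exact hone
      exact hmZ (exp_two_pi_div_eq_one (by exact_mod_cast hmC) h1)
    have hkem : (ζ ^ (k : ℤ)) ^ m = 1 := by
      rw [hzk, ← Complex.exp_nat_mul]
      rw [show (m : ℂ) * (2 * Real.pi * Complex.I / m) = 2 * Real.pi * Complex.I by
        field_simp]
      exact Complex.exp_two_pi_mul_I
    have hsum1 : (∑ j ∈ Finset.range m, (ζ ^ (k : ℤ)) ^ j) = 0 := by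
      rw [geom_sum_eq hke, hkem, sub_self, zero_div]
    have hsum2 : (∑ j ∈ Finset.range m, (ζ ^ (-k : ℤ)) ^ j) = 0 := by
      have hne : ζ ^ (-k : ℤ) ≠ 1 := by
        rw [zpow_neg]
        simpa [inv_eq_one] using hke
      rw [geom_sum_eq hne, zpow_neg, inv_pow, hkem, inv_one, sub_self, zero_div]
    have hv := congrArg (fun g => (phi t g).v) h
    rw [phi_engel_pow_v, phi_v_eq, ← hk, ← hl, habel, Units.val_zpow_eq_zpow_val,
      Units.val_zpow_eq_zpow_val, htv, hsum1, hsum2, zero_mul, mul_zero, zero_mul,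
      add_zero] at hv
    -- hv : r * (ζ - 1)^(n+1) = 0
    rcases mul_eq_zero.1 hv with h1 | h1
    · exact absurd h1 (Nat.cast_ne_zero.2 (by omega))
    · exact hζ1 (by linear_combination (pow_eq_zero_iff (n := n + 1) (by omega)).1 h1)
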